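/- For a real-valued random variable Y with E[Y]=0, E[Y²]=σ², and Y ≤ s' ≤ s almost surely where s > 0 and s ≥ σ (so that σ²/s² ≤ 1), for any λ ≥ 0, E[e^{λY}] ≤ (σ²/s²)e^{λs} + 1 − σ²/s² − λσ²/s. -/

import Mathlib

open MeasureTheory Real
open scoped Nat

lemma aux_mono_G : Monotone (fun t : ℝ => Real.exp t - 1 - t - t ^ 2 / 2) := by
  have h : ∀ t : ℝ, HasDerivAt (fun t : ℝ => Real.exp t - 1 - t - t ^ 2 / 2)
      (Real.exp t - 1 - t) t := by
    intro t
    have h1 := (((Real.hasDerivAt_exp t).sub_const 1).sub (hasDerivAt_id t)).sub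
      ((hasDerivAt_pow 2 t).div_const 2)
    refine h1.congr_deriv ?_
    push_cast; ring
  apply monotone_of_deriv_nonneg
  · exact fun t => (h t).differentiableAt
  · intro t
    rw [(h t).deriv]
    have := Real.add_one_le_exp t
    linarith

lemma aux_summable (t : ℝ) : Summable (fun n : ℕ => t ^ n / ((n + 2)! : ℝ)) := by
  apply Summable.of_norm_bounded
    (Real.summable_pow_div_factorial |t|)
  intro n
  rw [norm_div, norm_pow, Real.norm_eq_abs, Real.norm_natCast]
  gcongr
  omega

noncomputable def Fser (t : ℝ) : ℝ := ∑' n : ℕ, t ^ n / ((n + 2)! : ℝ)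

lemma aux_exp_eq (t : ℝ) : Real.exp t = 1 + t + t ^ 2 * Fser t := by
  have hsum : Summable (fun n : ℕ => t ^ n / (n ! : ℝ)) := Real.summable_pow_div_factorial t
  have h0 : Real.exp t = ∑' n : ℕ, t ^ n / (n ! : ℝ) := by
    rw [Real.exp_eq_exp_ℝ, NormedSpace.exp_eq_tsum_div]
  have hsum1 : Summable (fun n : ℕ => t ^ (n + 1) / (((n + 1))! : ℝ)) :=
    (summable_nat_add_iff 1).mpr hsum
  rw [h0, Summable.tsum_eq_zero_add hsum, Summable.tsum_eq_zero_add hsum1]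
  have h2 : ∀ n : ℕ, t ^ (n + 1 + 1) / (((n + 1 + 1))! : ℝ) = t ^ 2 * (t ^ n / (((n + 2))! : ℝ)) := by
    intro n
    rw [show n + 1 + 1 = n + 2 from rfl]
    ring
  rw [tsum_congr h2, tsum_mul_left]
  have : Fser t = ∑' n : ℕ, t ^ n / (((n + 2))! : ℝ) := rfl
  rw [← this]
  norm_num [Nat.factorial]
  ring

lemma aux_key {t T : ℝ} (hT : 0 < T) (htT : t ≤ T) :
    Real.exp t ≤ 1 + t + t ^ 2 / T ^ 2 * (Real.exp T - 1 - T) := by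
  have hFT : Real.exp T - 1 - T = T ^ 2 * Fser T := by
    have := aux_exp_eq T; linarith
  rcases le_or_gt 0 t with ht | ht
  · have hFt : Fser t ≤ Fser T := by
      apply Summable.tsum_le_tsum _ (aux_summable t) (aux_summable T)
      intro n
      gcongr
    have het := aux_exp_eq t
    have h2 : t ^ 2 / T ^ 2 * (Real.exp T - 1 - T) = t ^ 2 * Fser T := by
      rw [hFT]; field_simp
    rw [h2, het]
    nlinarith [sq_nonneg t]
  · have hG1 := aux_mono_G (le_of_lt ht : t ≤ 0)
    have hG2 := aux_mono_G hT.le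
    simp only [Real.exp_zero] at hG1 hG2
    have h1 : Real.exp t - 1 - t ≤ t ^ 2 / 2 := by norm_num at hG1; linarith
    have h2 : T ^ 2 / 2 ≤ Real.exp T - 1 - T := by norm_num at hG2; linarith
    have h3 : t ^ 2 / 2 ≤ t ^ 2 / T ^ 2 * (Real.exp T - 1 - T) := by
      rw [div_mul_eq_mul_div, le_div_iff₀ (by positivity)]
      nlinarith [sq_nonneg t, sq_nonneg T]
    linarith

theorem bennett_mgf_bound {Ω : Type*} [MeasurableSpace Ω] (μ : Measure Ω)
    [IsProbabilityMeasure μ] (Y : Ω → ℝ) (σ s s' lam : ℝ)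
    (hs : 0 < s) (hs' : s' ≤ s) (hσs : σ ≤ s) (hlam : 0 ≤ lam)
    (hmeas : Measurable Y)
    (hint : Integrable Y μ) (hmean : ∫ ω, Y ω ∂μ = 0)
    (hint2 : Integrable (fun ω => (Y ω) ^ 2) μ)
    (hvar : ∫ ω, (Y ω) ^ 2 ∂μ = σ ^ 2)
    (hbdd : ∀ᵐ ω ∂μ, Y ω ≤ s')
    (hintexp : Integrable (fun ω => Real.exp (lam * Y ω)) μ) :
    ∫ ω, Real.exp (lam * Y ω) ∂μ ≤
      σ ^ 2 / s ^ 2 * Real.exp (lam * s) + 1 - σ ^ 2 / s ^ 2 - lam * σ ^ 2 / s := by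
  set c := Real.exp (lam * s) - 1 - lam * s with hc
  have hpt : ∀ᵐ ω ∂μ, Real.exp (lam * Y ω) ≤ 1 + lam * Y ω + (Y ω) ^ 2 * (c / s ^ 2) := by
    filter_upwards [hbdd] with ω hω
    rcases eq_or_lt_of_le hlam with h0 | hpos
    · have : c = 0 := by simp [hc, ← h0]
      simp [← h0, this]
    · have hkey := aux_key (t := lam * Y ω) (T := lam * s) (by positivity)
        (by exact mul_le_mul_of_nonneg_left (hω.trans hs') hpos.le)
      have heq : (lam * Y ω) ^ 2 / (lam * s) ^ 2 * c = (Y ω) ^ 2 * (c / s ^ 2) := by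
        rw [mul_pow, mul_pow]
        rw [mul_div_mul_left _ _ (by positivity : (lam : ℝ) ^ 2 ≠ 0)]
        ring
      rw [← hc, heq] at hkey
      linarith
  have hB : Integrable (fun ω => lam * Y ω) μ := hint.const_mul lam
  have hA : Integrable (fun ω => 1 + lam * Y ω) μ := (integrable_const 1).add hB
  have hintR : Integrable (fun ω => 1 + lam * Y ω + (Y ω) ^ 2 * (c / s ^ 2)) μ :=
    hA.add (hint2.mul_const _)
  have hle := integral_mono_ae hintexp hintR hpt
  rw [integral_add hA (hint2.mul_const _),
      integral_add (integrable_const 1) hB,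
      integral_const, integral_const_mul, integral_mul_const, hmean, hvar] at hle
  simp only [measure_univ, probReal_univ, ENNReal.toReal_one, smul_eq_mul, mul_one, mul_zero, add_zero] at hle
  have hfin : 1 + σ ^ 2 * (c / s ^ 2) =
      σ ^ 2 / s ^ 2 * Real.exp (lam * s) + 1 - σ ^ 2 / s ^ 2 - lam * σ ^ 2 / s := by
    rw [hc]; field_simp; ring
  linarith
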